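/- Let γ ∈ Q_ε (so γ : [0,1] → BC¹_ℂ(W_{2ε},ℂ^m)_ℝ is 𝓛¹ with ∫₀¹‖γ(s)‖_{BC¹}ds < 1/2). Then the nonautonomous differential equation y′(t) = γ(t)(y(t)) on W_{2ε} satisfies local existence and local uniqueness of Carathéodory solutions; for each y₀ ∈ V_ε the maximal Carathéodory solution with y(0) = y₀ is defined on all of [0,1], takes values in W_ε, and equals t ↦ Ψ^{[γ]}_ε(t)(y₀). -/

import Mathlib

open Set MeasureTheory

/-- `W_ε = (−2−ε, 2+ε)^m + i(−ε,ε)^m ⊆ ℂ^m` (maximum norm on `ℂ^m = Fin m → ℂ`). -/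
def Wset (m : ℕ) (ε : ℝ) : Set (Fin m → ℂ) :=
  {z | ∀ k, |(z k).re| < 2 + ε ∧ |(z k).im| < ε}

/-- `V_ε = (−1−ε/2, 1+ε/2)^m + i(−ε/2, ε/2)^m ⊆ ℂ^m`. -/
def Vset (m : ℕ) (ε : ℝ) : Set (Fin m → ℂ) :=
  {z | ∀ k, |(z k).re| < 1 + ε / 2 ∧ |(z k).im| < ε / 2}

/-- `γ ∈ Q_ε` (see the paper): an `𝓛¹` family `γ : [0,1] → BC¹_ℂ(W_{2ε}, ℂ^m)_ℝ` with
`∫₀¹ ‖γ(s)‖_{BC¹} ds < 1/2`, witnessed by the integrable bound `b`. -/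
def GoodGamma (m : ℕ) (ε : ℝ) (γ : ℝ → (Fin m → ℂ) → (Fin m → ℂ)) (b : ℝ → ℝ) : Prop :=
  (∀ z ∈ Wset m (2 * ε), AEStronglyMeasurable (fun s => γ s z)
      (volume.restrict (Icc (0 : ℝ) 1))) ∧
  (∀ s ∈ Icc (0 : ℝ) 1, DifferentiableOn ℂ (γ s) (Wset m (2 * ε))) ∧
  (∀ s ∈ Icc (0 : ℝ) 1, ∀ z ∈ Wset m (2 * ε),
    (∀ k, (z k).im = 0) → ∀ k, (γ s z k).im = 0) ∧
  IntegrableOn b (Icc (0 : ℝ) 1) ∧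
  (∀ s ∈ Icc (0 : ℝ) 1, ∀ z ∈ Wset m (2 * ε),
    ‖γ s z‖ ≤ b s ∧ ‖fderivWithin ℂ (γ s) (Wset m (2 * ε)) z‖ ≤ b s) ∧
  (∫ s in Icc (0 : ℝ) 1, b s) < 1 / 2

/-- `ζ = Ψ^{[γ]}_ε`: solution of `ζ(t) = id_{V_ε} + ∫₀ᵗ γ(s) ∘ ζ(s) ds` with values in
`Hol_b(V_ε, ℂ^m)_ℝ`, mapping `V_ε` into `closure (W_ε)`. -/
def SolProp (m : ℕ) (ε : ℝ) (γ ζ : ℝ → (Fin m → ℂ) → (Fin m → ℂ)) : Prop :=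
  (∀ z ∈ Vset m ε, ContinuousOn (fun t => ζ t z) (Icc (0 : ℝ) 1)) ∧
  (∀ t ∈ Icc (0 : ℝ) 1, DifferentiableOn ℂ (ζ t) (Vset m ε)) ∧
  (∀ t ∈ Icc (0 : ℝ) 1, ∀ z ∈ Vset m ε, (∀ k, (z k).im = 0) → ∀ k, (ζ t z k).im = 0) ∧
  (∀ t ∈ Icc (0 : ℝ) 1, ∀ z ∈ Vset m ε, ζ t z ∈ closure (Wset m ε)) ∧
  (∀ t ∈ Icc (0 : ℝ) 1, ∀ z ∈ Vset m ε, ζ t z = z + ∫ s in (0 : ℝ)..t, γ s (ζ s z))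

lemma combo_abs_lt {x y c a b : ℝ} (hx : |x| < c) (hy : |y| < c)
    (ha : 0 ≤ a) (hb : 0 ≤ b) (hab : a + b = 1) : |a * x + b * y| < c := by
  have h1 : |a * x + b * y| ≤ a * |x| + b * |y| := by
    calc |a * x + b * y| ≤ |a * x| + |b * y| := abs_add_le _ _
    _ = a * |x| + b * |y| := by rw [abs_mul, abs_mul, abs_of_nonneg ha, abs_of_nonneg hb]
  rcases eq_or_lt_of_le ha with h | h
  · have hb1 : b = 1 := by linarith
    refine h1.trans_lt ?_
    rw [← h, hb1]; simpa using hy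
  · have : a * |x| + b * |y| < a * c + b * c := by
      have h2 : a * |x| < a * c := by exact (mul_lt_mul_iff_right₀ h).mpr hx
      have h3 : b * |y| ≤ b * c := mul_le_mul_of_nonneg_left hy.le hb
      linarith
    calc |a * x + b * y| ≤ a * |x| + b * |y| := h1
    _ < a * c + b * c := this
    _ = c := by rw [← add_mul, hab, one_mul]

lemma wset_eq (m : ℕ) (ε : ℝ) : Wset m ε =
    ⋂ k : Fin m, ((fun z : Fin m → ℂ => |(z k).re|) ⁻¹' Iio (2 + ε)) ∩
      ((fun z : Fin m → ℂ => |(z k).im|) ⁻¹' Iio ε) := by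
  ext z; simp [Wset, forall_and]

lemma wset_isOpen (m : ℕ) (ε : ℝ) : IsOpen (Wset m ε) := by
  rw [wset_eq]
  refine isOpen_iInter_of_finite fun k => IsOpen.inter ?_ ?_
  · exact isOpen_Iio.preimage ((Complex.continuous_re.comp (continuous_apply k)).abs)
  · exact isOpen_Iio.preimage ((Complex.continuous_im.comp (continuous_apply k)).abs)

lemma wset_convex (m : ℕ) (ε : ℝ) : Convex ℝ (Wset m ε) := by
  intro z hz w hw a b ha hb hab
  intro k
  have hre : ((a • z + b • w) k).re = a * (z k).re + b * (w k).re := by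
    simp [Complex.smul_re]
  have him : ((a • z + b • w) k).im = a * (z k).im + b * (w k).im := by
    simp [Complex.smul_im]
  exact ⟨hre ▸ combo_abs_lt (hz k).1 (hw k).1 ha hb hab,
    him ▸ combo_abs_lt (hz k).2 (hw k).2 ha hb hab⟩

lemma zero_mem_wset (m : ℕ) {ε : ℝ} (hε : 0 < ε) : (0 : Fin m → ℂ) ∈ Wset m ε := by
  intro k; simp [abs_of_nonneg]; constructor <;> linarith

lemma closure_wset_subset (m : ℕ) (ε : ℝ) :
    closure (Wset m ε) ⊆ {z | ∀ k, |(z k).re| ≤ 2 + ε ∧ |(z k).im| ≤ ε} := by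
  apply closure_minimal
  · intro z hz k; exact ⟨(hz k).1.le, (hz k).2.le⟩
  · have : {z : Fin m → ℂ | ∀ k, |(z k).re| ≤ 2 + ε ∧ |(z k).im| ≤ ε} =
      ⋂ k : Fin m, ((fun z : Fin m → ℂ => |(z k).re|) ⁻¹' Iic (2 + ε)) ∩
        ((fun z : Fin m → ℂ => |(z k).im|) ⁻¹' Iic ε) := by
      ext z; simp [forall_and]
    rw [this]
    refine isClosed_iInter fun k => IsClosed.inter ?_ ?_
    · exact isClosed_Iic.preimage ((Complex.continuous_re.comp (continuous_apply k)).abs)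
    · exact isClosed_Iic.preimage ((Complex.continuous_im.comp (continuous_apply k)).abs)

lemma gammaComp_aesm {m : ℕ} {ε : ℝ} {γ : ℝ → (Fin m → ℂ) → (Fin m → ℂ)}
    (hmeas : ∀ z ∈ Wset m (2 * ε), AEStronglyMeasurable (fun s => γ s z)
      (volume.restrict (Icc (0 : ℝ) 1)))
    (hdiff : ∀ s ∈ Icc (0 : ℝ) 1, DifferentiableOn ℂ (γ s) (Wset m (2 * ε)))
    {α β : ℝ} (hαβ : α ≤ β) (h0 : 0 ≤ α) (h1 : β ≤ 1)
    {f : ℝ → Fin m → ℂ} (hf : ContinuousOn f (Icc α β))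
    (hfW : ∀ s ∈ Icc α β, f s ∈ Wset m (2 * ε)) :
    AEStronglyMeasurable (fun s => γ s (f s)) (volume.restrict (Icc α β)) := by
  rcases eq_or_lt_of_le hαβ with h | h
  · have hz : volume.restrict (Icc α β) = 0 := by
      rw [Measure.restrict_eq_zero, ← h, Icc_self]
      exact measure_singleton α
    rw [hz]; exact aestronglyMeasurable_zero_measure _
  · set δ := β - α with hδ
    have hδpos : 0 < δ := by simp only [hδ]; linarith
    set c : ℝ → ℝ := fun s => max α (min β s) with hc
    have hc_cont : Continuous c := continuous_const.max (continuous_const.min continuous_id)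
    have hc_mem : ∀ s, c s ∈ Icc α β := by
      intro s
      refine ⟨le_max_left _ _, max_le hαβ (min_le_left _ _)⟩
    have hc_id : ∀ s ∈ Icc α β, c s = s := by
      intro s hs
      simp only [hc, min_eq_right hs.2, max_eq_right hs.1]
    set F : ℝ → (Fin m → ℂ) := fun s => f (c s) with hF
    have hF_cont : Continuous F := hf.comp_continuous hc_cont hc_mem
    have hFW : ∀ s, F s ∈ Wset m (2 * ε) := fun s => hfW _ (hc_mem s)
    set kf : ℕ → ℝ → ℤ := fun n s => ⌊((n : ℝ) + 1) * (c s - α) / δ⌋ with hkf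
    have hkf_meas : ∀ n, Measurable (kf n) := by
      intro n
      exact (((hc_cont.measurable.sub measurable_const).const_mul _).div_const _).floor
    set v : ℕ → ℤ → ℝ := fun n k => α + δ * k / ((n : ℝ) + 1) with hv
    have hkf_nonneg : ∀ n s, 0 ≤ kf n s := by
      intro n s
      apply Int.floor_nonneg.mpr
      have h4 := (hc_mem s).1
      apply div_nonneg _ hδpos.le
      apply mul_nonneg (by positivity)
      linarith
    have hkf_le : ∀ n s, kf n s ≤ (n : ℤ) + 1 := by
      intro n s
      have h2 : ((n : ℝ) + 1) * (c s - α) / δ ≤ (n : ℝ) + 1 := by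
        rw [div_le_iff₀ hδpos]
        have h3 : c s - α ≤ δ := by
          have := (hc_mem s).2; simp only [hδ]; linarith
        nlinarith [h3, Nat.cast_nonneg (α := ℝ) n]
      have h4 : ((n : ℝ) + 1) = (((n : ℤ) + 1 : ℤ) : ℝ) := by push_cast; ring
      calc kf n s ≤ ⌊((n : ℝ) + 1)⌋ := Int.floor_le_floor h2
      _ = (n : ℤ) + 1 := by rw [h4, Int.floor_intCast]
    set g : ℕ → ℝ → (Fin m → ℂ) := fun n s => ∑ k ∈ Finset.range (n + 2),
      ({s' : ℝ | kf n s' = (k : ℤ)}).indicator (fun s' => γ s' (F (v n k))) s with hg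
    have hg_aesm : ∀ n, AEStronglyMeasurable (g n) (volume.restrict (Icc α β)) := by
      intro n
      apply Finset.aestronglyMeasurable_fun_sum
      intro k _
      apply AEStronglyMeasurable.indicator
      · have base := hmeas (F (v n k)) (hFW (v n k))
        have hre : volume.restrict (Icc α β) =
            (volume.restrict (Icc (0:ℝ) 1)).restrict (Icc α β) := by
          rw [Measure.restrict_restrict measurableSet_Icc, inter_eq_left.mpr]
          intro x hx; exact ⟨h0.trans hx.1, hx.2.trans h1⟩
        rw [hre]
        exact base.restrict
      · exact (hkf_meas n) (measurableSet_singleton _)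
    have hg_eval : ∀ n s, g n s = γ s (F (v n (kf n s))) := by
      intro n s
      have hmem : (kf n s).toNat ∈ Finset.range (n + 2) := by
        rw [Finset.mem_range]
        have := hkf_le n s
        omega
      have hgns : g n s = ∑ k ∈ Finset.range (n + 2),
          ({s' : ℝ | kf n s' = (k : ℤ)}).indicator (fun s' => γ s' (F (v n k))) s := rfl
      rw [hgns, Finset.sum_eq_single_of_mem _ hmem]
      · have hs' : s ∈ {s' : ℝ | kf n s' = (((kf n s).toNat : ℕ) : ℤ)} := by
          simp only [mem_setOf_eq, Int.toNat_of_nonneg (hkf_nonneg n s)]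
        rw [indicator_of_mem hs', Int.toNat_of_nonneg (hkf_nonneg n s)]
      · intro j _ hj
        apply indicator_of_notMem
        simp only [mem_setOf_eq]
        intro heq
        apply hj
        omega
    have key : ∀ s ∈ Icc α β,
        Filter.Tendsto (fun n => g n s) Filter.atTop (nhds (γ s (f s))) := by
      intro s hs
      have hcs : c s = s := hc_id s hs
      set u : ℕ → ℝ := fun n => v n (kf n s) with hu
      have hu_bound : ∀ n, |u n - s| ≤ δ / ((n : ℝ) + 1) := by
        intro n
        have hn1 : (0:ℝ) < (n : ℝ) + 1 := by positivity
        have hcs' : kf n s = ⌊((n : ℝ) + 1) * (s - α) / δ⌋ := by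
          simp only [hkf, hcs]
        set K : ℝ := ((kf n s : ℤ) : ℝ) with hK
        have hfl1 : K ≤ ((n : ℝ) + 1) * (s - α) / δ := by
          rw [hK, hcs']; exact Int.floor_le _
        have hfl2 : ((n : ℝ) + 1) * (s - α) / δ - 1 < K := by
          rw [hK, hcs']; exact Int.sub_one_lt_floor _
        have hA : K * δ ≤ ((n : ℝ) + 1) * (s - α) := (le_div_iff₀ hδpos).mp hfl1
        have hB : ((n : ℝ) + 1) * (s - α) < (K + 1) * δ :=
          (div_lt_iff₀ hδpos).mp (by linarith)
        have hun : u n = α + δ * K / ((n : ℝ) + 1) := rfl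
        have h7 : u n - s = (δ * K - (s - α) * ((n : ℝ) + 1)) / ((n : ℝ) + 1) := by
          rw [hun]; field_simp; ring
        rw [h7, abs_div, abs_of_pos hn1, div_le_div_iff_of_pos_right hn1]
        rw [abs_le]
        constructor <;> nlinarith [hA, hB, hδpos]
      have hu_tend : Filter.Tendsto u Filter.atTop (nhds s) := by
        rw [tendsto_iff_dist_tendsto_zero]
        apply squeeze_zero (fun n => dist_nonneg)
          (fun n => by simpa [Real.dist_eq] using hu_bound n)
        have h8 : Filter.Tendsto (fun n : ℕ => δ * (1 / ((n:ℝ) + 1)))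
            Filter.atTop (nhds (δ * 0)) :=
          tendsto_one_div_add_atTop_nhds_zero_nat.const_mul δ
        simpa [mul_one_div, div_eq_mul_inv] using h8
      have hs01 : s ∈ Icc (0:ℝ) 1 := ⟨h0.trans hs.1, hs.2.trans h1⟩
      have hgamma_cont : ContinuousAt (γ s) (F s) :=
        ((hdiff s hs01).continuousOn).continuousAt ((wset_isOpen m (2*ε)).mem_nhds (hFW s))
      have hFu : Filter.Tendsto (fun n => F (u n)) Filter.atTop (nhds (F s)) :=
        (hF_cont.tendsto s).comp hu_tend
      have h9 : Filter.Tendsto (fun n => γ s (F (u n))) Filter.atTop (nhds (γ s (F s))) :=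
        (hgamma_cont.tendsto).comp hFu
      have hFs : F s = f s := congrArg f hcs
      have h10 : (fun n => g n s) = fun n => γ s (F (u n)) :=
        funext fun n => hg_eval n s
      rw [h10, ← hFs]
      exact h9
    refine aestronglyMeasurable_of_tendsto_ae Filter.atTop hg_aesm ?_
    rw [ae_restrict_iff' measurableSet_Icc]
    exact Filter.Eventually.of_forall key

lemma gamma_lip {m : ℕ} {ε : ℝ} {γ : ℝ → (Fin m → ℂ) → (Fin m → ℂ)} {b : ℝ → ℝ}
    (hdiff : ∀ s ∈ Icc (0:ℝ) 1, DifferentiableOn ℂ (γ s) (Wset m (2*ε)))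
    (hbd : ∀ s ∈ Icc (0:ℝ) 1, ∀ z ∈ Wset m (2*ε),
      ‖γ s z‖ ≤ b s ∧ ‖fderivWithin ℂ (γ s) (Wset m (2*ε)) z‖ ≤ b s)
    {s : ℝ} (hs : s ∈ Icc (0:ℝ) 1) {x y : Fin m → ℂ}
    (hx : x ∈ Wset m (2*ε)) (hy : y ∈ Wset m (2*ε)) :
    ‖γ s x - γ s y‖ ≤ b s * ‖x - y‖ :=
  (wset_convex m (2*ε)).norm_image_sub_le_of_norm_fderivWithin_le (hdiff s hs)
    (fun z hz => (hbd s hs z hz).2) hy hx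

lemma gammaComp_integrableOn {m : ℕ} {ε : ℝ} {γ : ℝ → (Fin m → ℂ) → (Fin m → ℂ)} {b : ℝ → ℝ}
    (hmeas : ∀ z ∈ Wset m (2 * ε), AEStronglyMeasurable (fun s => γ s z)
      (volume.restrict (Icc (0 : ℝ) 1)))
    (hdiff : ∀ s ∈ Icc (0 : ℝ) 1, DifferentiableOn ℂ (γ s) (Wset m (2 * ε)))
    (hbint : IntegrableOn b (Icc (0:ℝ) 1))
    (hbd : ∀ s ∈ Icc (0:ℝ) 1, ∀ z ∈ Wset m (2*ε),
      ‖γ s z‖ ≤ b s ∧ ‖fderivWithin ℂ (γ s) (Wset m (2*ε)) z‖ ≤ b s)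
    {α β : ℝ} (hαβ : α ≤ β) (h0 : 0 ≤ α) (h1 : β ≤ 1)
    {f : ℝ → Fin m → ℂ} (hf : ContinuousOn f (Icc α β))
    (hfW : ∀ s ∈ Icc α β, f s ∈ Wset m (2 * ε)) :
    IntegrableOn (fun s => γ s (f s)) (Icc α β) := by
  have hsub : Icc α β ⊆ Icc (0:ℝ) 1 := fun x hx => ⟨h0.trans hx.1, hx.2.trans h1⟩
  refine Integrable.mono' (hbint.mono_set hsub)
    (gammaComp_aesm hmeas hdiff hαβ h0 h1 hf hfW) ?_
  rw [ae_restrict_iff' measurableSet_Icc]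
  exact Filter.Eventually.of_forall fun s hs => (hbd s (hsub hs) (f s) (hfW s hs)).1

lemma norm_intervalIntegral_le_b {E : Type*} [NormedAddCommGroup E] [NormedSpace ℝ E] {b : ℝ → ℝ}
    (hbint : IntegrableOn b (Icc (0:ℝ) 1)) (hb0 : ∀ s ∈ Icc (0:ℝ) 1, 0 ≤ b s)
    {lo hi t₀ t : ℝ} (hsub : uIcc t₀ t ⊆ Icc lo hi) (hIcc : Icc lo hi ⊆ Icc 0 1)
    {f : ℝ → E}
    (hbd : ∀ s ∈ uIoc t₀ t, ‖f s‖ ≤ b s) :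
    ‖∫ s in t₀..t, f s‖ ≤ ∫ s in Icc lo hi, b s := by
  have hsub2 : uIcc t₀ t ⊆ Icc (0:ℝ) 1 := hsub.trans hIcc
  have hIoc_sub : uIoc t₀ t ⊆ uIcc t₀ t := uIoc_subset_uIcc
  have hbi : IntervalIntegrable b volume t₀ t :=
    (hbint.mono_set hsub2).intervalIntegrable
  have h1 : ‖∫ s in t₀..t, f s‖ ≤ |∫ s in t₀..t, b s| :=
    intervalIntegral.norm_integral_le_abs_of_norm_le
      ((ae_restrict_iff' measurableSet_uIoc).mpr (Filter.Eventually.of_forall hbd)) hbi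
  refine h1.trans ?_
  rw [intervalIntegral.abs_intervalIntegral_eq]
  have h2 : |∫ s in uIoc t₀ t, b s| = ∫ s in uIoc t₀ t, b s := by
    rw [abs_eq_self]
    exact setIntegral_nonneg measurableSet_uIoc
      (fun s hs => hb0 s (hsub2 (hIoc_sub hs)))
  rw [h2]
  refine setIntegral_mono_set (hbint.mono_set hIcc) ?_ ?_
  · exact (ae_restrict_iff' measurableSet_Icc).mpr
      (Filter.Eventually.of_forall fun s hs => hb0 s (hIcc hs))
  · exact (hIoc_sub.trans hsub).eventuallyLE

lemma b_nonneg' {m : ℕ} {ε : ℝ} (hε : 0 < ε) {γ : ℝ → (Fin m → ℂ) → (Fin m → ℂ)} {b : ℝ → ℝ}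
    (hbd : ∀ s ∈ Icc (0:ℝ) 1, ∀ z ∈ Wset m (2*ε),
      ‖γ s z‖ ≤ b s ∧ ‖fderivWithin ℂ (γ s) (Wset m (2*ε)) z‖ ≤ b s) :
    ∀ s ∈ Icc (0:ℝ) 1, 0 ≤ b s :=
  fun s hs => (norm_nonneg _).trans (hbd s hs 0 (zero_mem_wset m (by linarith))).1

lemma local_existence {m : ℕ} {ε : ℝ} (hε : 0 < ε)
    {γ : ℝ → (Fin m → ℂ) → (Fin m → ℂ)} {b : ℝ → ℝ}
    (hmeas : ∀ z ∈ Wset m (2 * ε), AEStronglyMeasurable (fun s => γ s z)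
      (volume.restrict (Icc (0 : ℝ) 1)))
    (hdiff : ∀ s ∈ Icc (0 : ℝ) 1, DifferentiableOn ℂ (γ s) (Wset m (2 * ε)))
    (hbint : IntegrableOn b (Icc (0:ℝ) 1))
    (hbd : ∀ s ∈ Icc (0:ℝ) 1, ∀ z ∈ Wset m (2*ε),
      ‖γ s z‖ ≤ b s ∧ ‖fderivWithin ℂ (γ s) (Wset m (2*ε)) z‖ ≤ b s)
    (hhalf : (∫ s in Icc (0:ℝ) 1, b s) < 1/2)
    {t₀ : ℝ} (ht₀ : t₀ ∈ Icc (0:ℝ) 1) {y₀ : Fin m → ℂ} (hy₀ : y₀ ∈ Wset m (2*ε)) :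
    ∃ a > (0:ℝ), ∃ η : ℝ → Fin m → ℂ,
      ContinuousOn η (Icc (t₀ - a) (t₀ + a) ∩ Icc 0 1) ∧
      ∀ t ∈ Icc (t₀ - a) (t₀ + a) ∩ Icc 0 1,
        η t ∈ Wset m (2 * ε) ∧ η t = y₀ + ∫ s in t₀..t, γ s (η s) := by
  have hb0 := b_nonneg' hε hbd
  obtain ⟨r₂, hr₂, hball⟩ := Metric.isOpen_iff.mp (wset_isOpen m (2*ε)) y₀ hy₀
  set r := r₂ / 2 with hr
  have hrpos : 0 < r := by positivity
  have hcb : Metric.closedBall y₀ r ⊆ Wset m (2*ε) :=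
    (Metric.closedBall_subset_ball (by simp only [hr]; linarith)).trans hball
  -- choice of a
  have habs : ∃ a > (0:ℝ),
      (∫ s in Icc (max (t₀ - a) 0) (min (t₀ + a) 1), b s) < r := by
    set μ := volume.restrict (Icc (0:ℝ) 1) with hμ
    set F : ℕ → ℝ → ℝ := fun n s =>
      (Icc (t₀ - 1/((n:ℝ)+1)) (t₀ + 1/((n:ℝ)+1))).indicator b s with hFdef
    have htend : Filter.Tendsto (fun n => ∫ s, F n s ∂μ) Filter.atTop (nhds 0) := by
      have h0int : (nhds (0:ℝ)) = nhds (∫ s, (0:ℝ) ∂μ) := by simp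
      rw [h0int]
      apply tendsto_integral_of_dominated_convergence (fun s => |b s|)
      · exact fun n => hbint.aestronglyMeasurable.indicator measurableSet_Icc
      · exact hbint.abs
      · intro n
        exact Filter.Eventually.of_forall fun s => norm_indicator_le_norm_self b s
      · have hnull : ∀ᵐ s ∂μ, s ≠ t₀ := by
          refine ae_iff.mpr ?_
          have hset : {s : ℝ | ¬ s ≠ t₀} = {t₀} := by ext s; simp
          have h1 : volume.restrict (Icc (0:ℝ) 1) {t₀} ≤ volume {t₀} :=
            Measure.restrict_le_self _
          rw [hset, hμ]
          exact le_antisymm (by simpa using h1) zero_le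
        filter_upwards [hnull] with s hs
        obtain ⟨N, hN⟩ := exists_nat_gt (1 / |s - t₀|)
        have habs0 : 0 < |s - t₀| := abs_pos.mpr (sub_ne_zero.mpr hs)
        apply tendsto_atTop_of_eventually_const (i₀ := N)
        intro n hn
        have h1n : 1/((n:ℝ)+1) < |s - t₀| := by
          rw [div_lt_iff₀ (by positivity : (0:ℝ) < (n:ℝ)+1)]
          rw [div_lt_iff₀ habs0] at hN
          have hNn : (N:ℝ) ≤ (n:ℝ) := by exact_mod_cast hn
          nlinarith [habs0]
        have hnot : s ∉ Icc (t₀ - 1/((n:ℝ)+1)) (t₀ + 1/((n:ℝ)+1)) := by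
          intro hmem
          have h1 : |s - t₀| ≤ 1/((n:ℝ)+1) := by
            rw [abs_sub_le_iff]
            constructor <;> [linarith [hmem.2]; linarith [hmem.1]]
          linarith
        exact indicator_of_notMem hnot b
    obtain ⟨n, hn⟩ := (htend.eventually (gt_mem_nhds hrpos)).exists
    refine ⟨1/((n:ℝ)+1), by positivity, ?_⟩
    have heq : ∫ s, F n s ∂μ =
        ∫ s in Icc (max (t₀ - 1/((n:ℝ)+1)) 0) (min (t₀ + 1/((n:ℝ)+1)) 1), b s := by
      rw [hFdef, integral_indicator measurableSet_Icc, hμ,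
        Measure.restrict_restrict measurableSet_Icc, Icc_inter_Icc]
    rw [← heq]
    exact hn
  obtain ⟨a, hapos, haint⟩ := habs
  refine ⟨a, hapos, ?_⟩
  set α := max (t₀ - a) 0 with hα
  set β := min (t₀ + a) 1 with hβ
  have h0α : (0:ℝ) ≤ α := le_max_right _ _
  have hβ1 : β ≤ 1 := min_le_right _ _
  have ht₀αβ : t₀ ∈ Icc α β :=
    ⟨max_le (by linarith [hapos]) ht₀.1, le_min (by linarith [hapos]) ht₀.2⟩
  have hαβ : α ≤ β := ht₀αβ.1.trans ht₀αβ.2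
  have hIeq : Icc (t₀ - a) (t₀ + a) ∩ Icc (0:ℝ) 1 = Icc α β := Icc_inter_Icc
  have hsub01 : Icc α β ⊆ Icc (0:ℝ) 1 := fun x hx => ⟨h0α.trans hx.1, hx.2.trans hβ1⟩
  have hintαβ : (∫ s in Icc α β, b s) < r := haint
  have hinthalf : (∫ s in Icc α β, b s) < 1/2 := by
    refine lt_of_le_of_lt ?_ hhalf
    refine setIntegral_mono_set hbint ?_ hsub01.eventuallyLE
    exact (ae_restrict_iff' measurableSet_Icc).mpr
      (Filter.Eventually.of_forall fun s hs => hb0 s hs)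
  -- the complete space of candidate curves
  set S : Set C(↥(Icc α β), Fin m → ℂ) := {u | ∀ x, u x ∈ Metric.closedBall y₀ r} with hSdef
  have hSclosed : IsClosed S := by
    have hSeq : S = ⋂ x : ↥(Icc α β),
        (fun u : C(↥(Icc α β), Fin m → ℂ) => u x) ⁻¹' (Metric.closedBall y₀ r) := by
      ext u; simp only [hSdef, mem_setOf_eq, mem_iInter, mem_preimage]
    rw [hSeq]
    exact isClosed_iInter fun x =>
      Metric.isClosed_closedBall.preimage (continuous_eval_const x)
  haveI : CompleteSpace ↥S := hSclosed.completeSpace_coe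
  haveI : Nonempty ↥S :=
    ⟨⟨ContinuousMap.const _ y₀, fun x => Metric.mem_closedBall_self hrpos.le⟩⟩
  set ext : ↥S → ℝ → (Fin m → ℂ) :=
    fun u s => (u : C(↥(Icc α β), Fin m → ℂ)) (projIcc α β hαβ s) with hext
  have hextc : ∀ u : ↥S, Continuous (ext u) :=
    fun u => (u : C(↥(Icc α β), Fin m → ℂ)).continuous.comp continuous_projIcc
  have hextW : ∀ u s, ext u s ∈ Wset m (2*ε) := fun u s => hcb (u.2 _)
  have hInt : ∀ u : ↥S, IntegrableOn (fun s => γ s (ext u s)) (Icc α β) := fun u =>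
    gammaComp_integrableOn hmeas hdiff hbint hbd hαβ h0α hβ1
      ((hextc u).continuousOn) (fun s _ => hextW u s)
  have hII : ∀ u : ↥S, ∀ x : ↥(Icc α β),
      IntervalIntegrable (fun s => γ s (ext u s)) volume t₀ (x:ℝ) := by
    intro u x
    have h1 := (hInt u).mono_set
      (show uIcc t₀ (x:ℝ) ⊆ Icc α β from uIcc_subset_Icc ht₀αβ x.2)
    exact h1.intervalIntegrable
  have hIocsub : ∀ x : ↥(Icc α β), uIoc t₀ (x:ℝ) ⊆ Icc α β :=
    fun x => uIoc_subset_uIcc.trans (uIcc_subset_Icc ht₀αβ x.2)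
  set Tfun : ↥S → ↥(Icc α β) → (Fin m → ℂ) :=
    fun u x => y₀ + ∫ s in t₀..(x:ℝ), γ s (ext u s) with hTfun
  have hTcont : ∀ u, Continuous (Tfun u) := by
    intro u
    have h1 : ContinuousOn (fun x : ℝ => ∫ s in t₀..x, γ s (ext u s)) (uIcc α β) := by
      apply intervalIntegral.continuousOn_primitive_interval'
      · have h2 := hInt u
        rw [← uIcc_of_le hαβ] at h2
        exact h2.intervalIntegrable
      · rw [uIcc_of_le hαβ]; exact ht₀αβ
    rw [uIcc_of_le hαβ] at h1
    exact continuous_const.add h1.restrict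
  have hTbound : ∀ u : ↥S, ∀ x : ↥(Icc α β), Tfun u x ∈ Metric.closedBall y₀ r := by
    intro u x
    rw [Metric.mem_closedBall, dist_eq_norm]
    have h3 : Tfun u x - y₀ = ∫ s in t₀..(x:ℝ), γ s (ext u s) :=
      add_sub_cancel_left y₀ _
    rw [h3]
    refine (norm_intervalIntegral_le_b hbint hb0
      (uIcc_subset_Icc ht₀αβ x.2) hsub01 ?_).trans hintαβ.le
    exact fun s hs => (hbd s (hsub01 (hIocsub x hs)) _ (hextW u s)).1
  set T : ↥S → ↥S := fun u => ⟨⟨Tfun u, hTcont u⟩, hTbound u⟩ with hT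
  have hdistbd : ∀ u v : ↥S, dist (T u) (T v) ≤ (1/2 : ℝ) * dist u v := by
    intro u v
    have hd0 : (0:ℝ) ≤ (1/2) * dist u v := by positivity
    rw [Subtype.dist_eq, ContinuousMap.dist_le hd0]
    intro x
    have heq2 : Tfun u x - Tfun v x =
        ∫ s in t₀..(x:ℝ), (γ s (ext u s) - γ s (ext v s)) := by
      rw [intervalIntegral.integral_sub (hII u x) (hII v x)]
      exact add_sub_add_left_eq_sub _ _ y₀
    rw [dist_eq_norm]
    show ‖Tfun u x - Tfun v x‖ ≤ (1/2) * dist u v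
    rw [heq2]
    have hmono : ∀ s ∈ uIoc t₀ (x:ℝ),
        ‖γ s (ext u s) - γ s (ext v s)‖ ≤ b s * dist u v := by
      intro s hs
      have hs' := hsub01 (hIocsub x hs)
      refine (gamma_lip hdiff hbd hs' (hextW u s) (hextW v s)).trans ?_
      have hd : ‖ext u s - ext v s‖ ≤ dist u v := by
        rw [← dist_eq_norm, hext]
        refine le_trans (ContinuousMap.dist_apply_le_dist _) ?_
        rw [Subtype.dist_eq]
      exact mul_le_mul_of_nonneg_left hd (hb0 s hs')
    have hb2int : IntegrableOn (fun s => b s * dist u v) (Icc (0:ℝ) 1) :=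
      hbint.mul_const _
    have hb20 : ∀ s ∈ Icc (0:ℝ) 1, 0 ≤ b s * dist u v :=
      fun s hs => mul_nonneg (hb0 s hs) dist_nonneg
    refine (norm_intervalIntegral_le_b hb2int hb20
      (uIcc_subset_Icc ht₀αβ x.2) hsub01 hmono).trans ?_
    rw [integral_mul_const]
    exact mul_le_mul_of_nonneg_right hinthalf.le dist_nonneg
  have hcontr : ContractingWith (1/2 : NNReal) T := by
    constructor
    · rw [← NNReal.coe_lt_coe]; norm_num
    · apply LipschitzWith.of_dist_le_mul
      intro u v
      have := hdistbd u v
      simpa using this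
  set us : ↥S := ContractingWith.fixedPoint T hcontr with hus
  have hfix : T us = us := hcontr.fixedPoint_isFixedPt
  refine ⟨ext us, ?_, ?_⟩
  · rw [hIeq]; exact (hextc us).continuousOn
  · intro t ht
    rw [hIeq] at ht
    have hval : ext us t = (us : C(↥(Icc α β), Fin m → ℂ)) ⟨t, ht⟩ := by
      show (us : C(↥(Icc α β), Fin m → ℂ)) (projIcc α β hαβ t) = _
      rw [projIcc_of_mem hαβ ht]
    constructor
    · rw [hval]; exact hcb (us.2 ⟨t, ht⟩)
    · have h5 : Tfun us ⟨t, ht⟩ = (us : C(↥(Icc α β), Fin m → ℂ)) ⟨t, ht⟩ := by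
        have h6 := congrArg (fun w : ↥S => (w : C(↥(Icc α β), Fin m → ℂ)) ⟨t, ht⟩) hfix
        simpa [hT] using h6
      rw [hval, ← h5]

lemma local_uniqueness {m : ℕ} {ε : ℝ} (hε : 0 < ε)
    {γ : ℝ → (Fin m → ℂ) → (Fin m → ℂ)} {b : ℝ → ℝ}
    (hmeas : ∀ z ∈ Wset m (2 * ε), AEStronglyMeasurable (fun s => γ s z)
      (volume.restrict (Icc (0 : ℝ) 1)))
    (hdiff : ∀ s ∈ Icc (0 : ℝ) 1, DifferentiableOn ℂ (γ s) (Wset m (2 * ε)))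
    (hbint : IntegrableOn b (Icc (0:ℝ) 1))
    (hbd : ∀ s ∈ Icc (0:ℝ) 1, ∀ z ∈ Wset m (2*ε),
      ‖γ s z‖ ≤ b s ∧ ‖fderivWithin ℂ (γ s) (Wset m (2*ε)) z‖ ≤ b s)
    (hhalf : (∫ s in Icc (0:ℝ) 1, b s) < 1/2)
    {t₀ : ℝ} (ht₀J : t₀ ∈ Icc (0:ℝ) 1) {J : Set ℝ} (hJ : J ⊆ Icc 0 1) (ht₀ : t₀ ∈ J)
    (hJc : J.OrdConnected) {η₁ η₂ : ℝ → Fin m → ℂ}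
    (hc1 : ContinuousOn η₁ J) (hc2 : ContinuousOn η₂ J)
    (h1 : ∀ t ∈ J, η₁ t ∈ Wset m (2 * ε) ∧ η₁ t = η₁ t₀ + ∫ s in t₀..t, γ s (η₁ s))
    (h2 : ∀ t ∈ J, η₂ t ∈ Wset m (2 * ε) ∧ η₂ t = η₂ t₀ + ∫ s in t₀..t, γ s (η₂ s))
    (h0 : η₁ t₀ = η₂ t₀) : Set.EqOn η₁ η₂ J := by
  have hb0 := b_nonneg' hε hbd
  intro t htJ
  set lo := min t₀ t with hlo
  set hi := max t₀ t with hhi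
  have hlohi : lo ≤ hi := min_le_max
  have hKJ : Icc lo hi ⊆ J := by
    rw [hlo, hhi, ← uIcc]
    exact hJc.uIcc_subset ht₀ htJ
  have hK01 : Icc lo hi ⊆ Icc (0:ℝ) 1 := hKJ.trans hJ
  have h0lo : (0:ℝ) ≤ lo := (hK01 ⟨le_refl lo, hlohi⟩).1
  have hhi1 : hi ≤ 1 := (hK01 ⟨hlohi, le_refl hi⟩).2
  set φ : ℝ → ℝ := fun u => ‖η₁ u - η₂ u‖ with hφ
  have hφc : ContinuousOn φ (Icc lo hi) :=
    (((hc1.mono hKJ).sub (hc2.mono hKJ)).norm)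
  obtain ⟨w, hwK, hwmax⟩ := isCompact_Icc.exists_isMaxOn
    ⟨lo, ⟨le_refl lo, hlohi⟩⟩ hφc
  have hwmax' : ∀ u ∈ Icc lo hi, φ u ≤ φ w := fun u hu => hwmax hu
  have hM0 : 0 ≤ φ w := norm_nonneg _
  -- integrability of both integrands on the relevant interval
  have hIInt : ∀ (η : ℝ → Fin m → ℂ), ContinuousOn η J →
      (∀ u ∈ J, η u ∈ Wset m (2 * ε)) → ∀ u ∈ Icc lo hi,
      IntervalIntegrable (fun s => γ s (η s)) volume t₀ u := by
    intro η hc hW u hu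
    have hsub : uIcc t₀ u ⊆ Icc lo hi :=
      uIcc_subset_Icc ⟨min_le_left _ _, le_max_left _ _⟩ hu
    have hint : IntegrableOn (fun s => γ s (η s)) (Icc lo hi) :=
      gammaComp_integrableOn hmeas hdiff hbint hbd hlohi h0lo hhi1
        (hc.mono hKJ) (fun s hs => hW s (hKJ hs))
    exact (hint.mono_set hsub).intervalIntegrable
  have hII1 := hIInt η₁ hc1 (fun u hu => (h1 u hu).1)
  have hII2 := hIInt η₂ hc2 (fun u hu => (h2 u hu).1)
  -- key contraction estimate at the max point
  have hkey : φ w ≤ (∫ s in Icc (0:ℝ) 1, b s) * φ w := by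
    have hwJ := hKJ hwK
    have heq : η₁ w - η₂ w =
        ∫ s in t₀..w, (γ s (η₁ s) - γ s (η₂ s)) := by
      rw [intervalIntegral.integral_sub (hII1 w hwK) (hII2 w hwK)]
      rw [(h1 w hwJ).2, (h2 w hwJ).2, h0]
      abel
    have hbd2 : ∀ s ∈ uIoc t₀ w, ‖γ s (η₁ s) - γ s (η₂ s)‖ ≤ b s * φ w := by
      intro s hs
      have hsK : s ∈ Icc lo hi :=
        (uIoc_subset_uIcc.trans (uIcc_subset_Icc ⟨min_le_left _ _, le_max_left _ _⟩ hwK)) hs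
      have hsJ := hKJ hsK
      have hs01 := hK01 hsK
      refine (gamma_lip hdiff hbd hs01 (h1 s hsJ).1 (h2 s hsJ).1).trans ?_
      exact mul_le_mul_of_nonneg_left (hwmax' s hsK) (hb0 s hs01)
    have hb2int : IntegrableOn (fun s => b s * φ w) (Icc (0:ℝ) 1) := hbint.mul_const _
    have hb20 : ∀ s ∈ Icc (0:ℝ) 1, 0 ≤ b s * φ w :=
      fun s hs => mul_nonneg (hb0 s hs) hM0
    have hnorm : ‖η₁ w - η₂ w‖ ≤ ∫ s in Icc lo hi, b s * φ w := by
      rw [heq]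
      exact norm_intervalIntegral_le_b hb2int hb20
        (uIcc_subset_Icc ⟨min_le_left _ _, le_max_left _ _⟩ hwK) hK01 hbd2
    refine hnorm.trans ?_
    rw [integral_mul_const]
    refine mul_le_mul_of_nonneg_right ?_ hM0
    refine setIntegral_mono_set hbint ?_ hK01.eventuallyLE
    exact (ae_restrict_iff' measurableSet_Icc).mpr
      (Filter.Eventually.of_forall fun s hs => hb0 s hs)
  have hbintpos : 0 ≤ ∫ s in Icc (0:ℝ) 1, b s :=
    setIntegral_nonneg measurableSet_Icc hb0
  have hMzero : φ w ≤ 0 := by nlinarith [hkey, hhalf, hM0, hbintpos]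
  have hφt : φ t ≤ 0 := (hwmax' t ⟨min_le_right _ _, le_max_right _ _⟩).trans hMzero
  have : η₁ t - η₂ t = 0 := by
    have := le_antisymm hφt (norm_nonneg _)
    exact norm_eq_zero.mp this
  exact sub_eq_zero.mp this

lemma closure_wset_sub {m : ℕ} {ε : ℝ} (hε : 0 < ε) :
    closure (Wset m ε) ⊆ Wset m (2 * ε) := by
  intro z hz k
  have h := closure_wset_subset m ε hz k
  exact ⟨lt_of_le_of_lt h.1 (by linarith), lt_of_le_of_lt h.2 (by linarith)⟩

lemma gamma_im_bound {m : ℕ} {ε : ℝ} (hε : 0 < ε)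
    {γ : ℝ → (Fin m → ℂ) → (Fin m → ℂ)} {b : ℝ → ℝ}
    (hdiff : ∀ s ∈ Icc (0 : ℝ) 1, DifferentiableOn ℂ (γ s) (Wset m (2 * ε)))
    (hreal : ∀ s ∈ Icc (0 : ℝ) 1, ∀ z ∈ Wset m (2 * ε),
      (∀ k, (z k).im = 0) → ∀ k, (γ s z k).im = 0)
    (hbd : ∀ s ∈ Icc (0:ℝ) 1, ∀ z ∈ Wset m (2*ε),
      ‖γ s z‖ ≤ b s ∧ ‖fderivWithin ℂ (γ s) (Wset m (2*ε)) z‖ ≤ b s)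
    {s : ℝ} (hs : s ∈ Icc (0:ℝ) 1) {w : Fin m → ℂ}
    (hw : w ∈ closure (Wset m ε)) : ∀ k, |(γ s w k).im| ≤ b s * ε := by
  have hb0 := b_nonneg' hε hbd
  have hwb : ∀ k, |(w k).re| ≤ 2 + ε ∧ |(w k).im| ≤ ε := closure_wset_subset m ε hw
  have hwW : w ∈ Wset m (2 * ε) := closure_wset_sub hε hw
  set wr : Fin m → ℂ := fun k => ((w k).re : ℂ) with hwr
  have hwrW : wr ∈ Wset m (2 * ε) := by
    intro k
    constructor
    · simp only [hwr, Complex.ofReal_re]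
      exact lt_of_le_of_lt (hwb k).1 (by linarith)
    · simp only [hwr, Complex.ofReal_im, abs_zero]
      linarith
  have hreal0 : ∀ k, (γ s wr k).im = 0 :=
    hreal s hs wr hwrW (fun k => by simp [hwr])
  intro k
  have hlip := gamma_lip hdiff hbd hs hwW hwrW
  have hnsub : ‖w - wr‖ ≤ ε := by
    rw [pi_norm_le_iff_of_nonneg hε.le]
    intro k'
    have hid : (w - wr) k' = ((w k').im : ℂ) * Complex.I := by
      simp only [Pi.sub_apply, hwr]
      apply Complex.ext <;> simp
    rw [hid]
    rw [norm_mul, Complex.norm_I, mul_one, Complex.norm_real, Real.norm_eq_abs]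
    exact (hwb k').2
  have h1 : |(γ s w k).im| = |(γ s w k - γ s wr k).im| := by
    rw [Complex.sub_im, hreal0 k, sub_zero]
  rw [h1]
  calc |(γ s w k - γ s wr k).im| ≤ ‖γ s w k - γ s wr k‖ :=
        Complex.abs_im_le_norm _
  _ = ‖(γ s w - γ s wr) k‖ := by simp
  _ ≤ ‖γ s w - γ s wr‖ := norm_le_pi_norm _ k
  _ ≤ b s * ‖w - wr‖ := hlip
  _ ≤ b s * ε := mul_le_mul_of_nonneg_left hnsub (hb0 s hs)

lemma flow_in_W {m : ℕ} {ε : ℝ} (hε : 0 < ε)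
    {γ : ℝ → (Fin m → ℂ) → (Fin m → ℂ)} {b : ℝ → ℝ}
    (hmeas : ∀ z ∈ Wset m (2 * ε), AEStronglyMeasurable (fun s => γ s z)
      (volume.restrict (Icc (0 : ℝ) 1)))
    (hdiff : ∀ s ∈ Icc (0 : ℝ) 1, DifferentiableOn ℂ (γ s) (Wset m (2 * ε)))
    (hreal : ∀ s ∈ Icc (0 : ℝ) 1, ∀ z ∈ Wset m (2 * ε),
      (∀ k, (z k).im = 0) → ∀ k, (γ s z k).im = 0)
    (hbint : IntegrableOn b (Icc (0:ℝ) 1))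
    (hbd : ∀ s ∈ Icc (0:ℝ) 1, ∀ z ∈ Wset m (2*ε),
      ‖γ s z‖ ≤ b s ∧ ‖fderivWithin ℂ (γ s) (Wset m (2*ε)) z‖ ≤ b s)
    (hhalf : (∫ s in Icc (0:ℝ) 1, b s) < 1/2)
    {ζ : ℝ → (Fin m → ℂ) → (Fin m → ℂ)}
    (hζc : ∀ z ∈ Vset m ε, ContinuousOn (fun t => ζ t z) (Icc (0:ℝ) 1))
    (hζW : ∀ t ∈ Icc (0:ℝ) 1, ∀ z ∈ Vset m ε, ζ t z ∈ closure (Wset m ε))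
    (hζeq : ∀ t ∈ Icc (0:ℝ) 1, ∀ z ∈ Vset m ε,
      ζ t z = z + ∫ s in (0:ℝ)..t, γ s (ζ s z))
    {y₀ : Fin m → ℂ} (hy₀ : y₀ ∈ Vset m ε) {t : ℝ} (ht : t ∈ Icc (0:ℝ) 1) :
    ζ t y₀ ∈ Wset m ε := by
  have hb0 := b_nonneg' hε hbd
  have hcont := hζc y₀ hy₀
  have hWs : ∀ s ∈ Icc (0:ℝ) 1, ζ s y₀ ∈ Wset m (2*ε) :=
    fun s hs => closure_wset_sub hε (hζW s hs y₀ hy₀)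
  have huIcc01 : uIcc (0:ℝ) t ⊆ Icc (0:ℝ) 1 :=
    uIcc_subset_Icc ⟨le_refl 0, zero_le_one⟩ ht
  have hint : IntegrableOn (fun s => γ s (ζ s y₀)) (Icc 0 t) :=
    gammaComp_integrableOn hmeas hdiff hbint hbd ht.1 (le_refl 0) ht.2
      (hcont.mono (Icc_subset_Icc (le_refl 0) ht.2))
      (fun s hs => hWs s ⟨hs.1, hs.2.trans ht.2⟩)
  have hII : IntervalIntegrable (fun s => γ s (ζ s y₀)) volume 0 t := by
    have h := hint
    rw [← uIcc_of_le ht.1] at h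
    exact h.intervalIntegrable
  set I : Fin m → ℂ := ∫ s in (0:ℝ)..t, γ s (ζ s y₀) with hIdef
  have heq := hζeq t ht y₀ hy₀
  have hbound1 : ∀ s ∈ uIoc (0:ℝ) t, ‖γ s (ζ s y₀)‖ ≤ b s := by
    intro s hs
    have hs01 : s ∈ Icc (0:ℝ) 1 := (uIoc_subset_uIcc.trans huIcc01) hs
    exact (hbd s hs01 _ (hWs s hs01)).1
  have hInorm : ‖I‖ ≤ ∫ s in Icc (0:ℝ) 1, b s :=
    norm_intervalIntegral_le_b hbint hb0 huIcc01 (fun x hx => hx) hbound1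
  intro k
  have hy₀k := hy₀ k
  constructor
  · have h1 : (ζ t y₀ k).re = (y₀ k).re + (I k).re := by
      rw [heq]; simp [hIdef]
    have h2 : |(I k).re| ≤ ‖I‖ :=
      (Complex.abs_re_le_norm _).trans (norm_le_pi_norm I k)
    rw [h1]
    calc |(y₀ k).re + (I k).re| ≤ |(y₀ k).re| + |(I k).re| := abs_add_le _ _
    _ < 2 + ε := by linarith [hy₀k.1, h2, hInorm, hhalf, hε]
  · set L : (Fin m → ℂ) →L[ℝ] ℝ :=
      Complex.imCLM.comp (ContinuousLinearMap.proj k) with hL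
    have hcomm : (∫ s in (0:ℝ)..t, L (γ s (ζ s y₀))) = L I :=
      L.intervalIntegral_comp_comm hII
    have hLbound : ∀ s ∈ uIoc (0:ℝ) t, ‖L (γ s (ζ s y₀))‖ ≤ b s * ε := by
      intro s hs
      have hs01 : s ∈ Icc (0:ℝ) 1 := (uIoc_subset_uIcc.trans huIcc01) hs
      have h3 := gamma_im_bound hε hdiff hreal hbd hs01 (hζW s hs01 y₀ hy₀) k
      simpa [hL, Real.norm_eq_abs] using h3
    have him : |L I| ≤ ∫ s in Icc (0:ℝ) 1, b s * ε := by
      rw [← Real.norm_eq_abs, ← hcomm]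
      exact norm_intervalIntegral_le_b (hbint.mul_const ε)
        (fun s hs => mul_nonneg (hb0 s hs) hε.le) huIcc01 (fun x hx => hx) hLbound
    have h4 : (∫ s in Icc (0:ℝ) 1, b s * ε) < ε / 2 := by
      rw [integral_mul_const]
      nlinarith [hhalf, hε]
    have h5 : (ζ t y₀ k).im = (y₀ k).im + L I := by
      rw [heq]
      simp [hIdef, hL]
    rw [h5]
    calc |(y₀ k).im + L I| ≤ |(y₀ k).im| + |L I| := abs_add_le _ _
    _ < ε := by linarith [hy₀k.2, him, h4]

/-- Lemma `local-lem` (d): for `γ ∈ Q_ε`, the differential equation `y'(t) = γ(t)(y(t))`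
on `W_{2ε}` satisfies local existence and local uniqueness of Carathéodory solutions
(expressed via the equivalent integral equations); for each `y₀ ∈ V_ε` the maximal
Carathéodory solution with `y(0) = y₀` is defined on all of `[0,1]`, takes values in
`W_ε`, and is given by `t ↦ Ψ^{[γ]}_ε(t)(y₀)`. -/
theorem caratheodory_local_flow (m : ℕ) (ε : ℝ) (hε : 0 < ε)
    (γ : ℝ → (Fin m → ℂ) → (Fin m → ℂ)) (b : ℝ → ℝ) (hγ : GoodGamma m ε γ b)
    (ζ : ℝ → (Fin m → ℂ) → (Fin m → ℂ)) (hζ : SolProp m ε γ ζ) :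
    -- local existence of Carathéodory solutions
    (∀ t₀ ∈ Icc (0 : ℝ) 1, ∀ y₀ ∈ Wset m (2 * ε), ∃ a > (0 : ℝ),
      ∃ η : ℝ → Fin m → ℂ, ContinuousOn η (Icc (t₀ - a) (t₀ + a) ∩ Icc 0 1) ∧
        ∀ t ∈ Icc (t₀ - a) (t₀ + a) ∩ Icc 0 1,
          η t ∈ Wset m (2 * ε) ∧ η t = y₀ + ∫ s in t₀..t, γ s (η s)) ∧
    -- local (indeed global) uniqueness of Carathéodory solutions
    (∀ t₀ ∈ Icc (0 : ℝ) 1, ∀ (J : Set ℝ), J ⊆ Icc 0 1 → t₀ ∈ J → J.OrdConnected →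
      ∀ η₁ η₂ : ℝ → Fin m → ℂ, ContinuousOn η₁ J → ContinuousOn η₂ J →
        (∀ t ∈ J, η₁ t ∈ Wset m (2 * ε) ∧ η₁ t = η₁ t₀ + ∫ s in t₀..t, γ s (η₁ s)) →
        (∀ t ∈ J, η₂ t ∈ Wset m (2 * ε) ∧ η₂ t = η₂ t₀ + ∫ s in t₀..t, γ s (η₂ s)) →
        η₁ t₀ = η₂ t₀ → Set.EqOn η₁ η₂ J) ∧
    -- for y₀ ∈ V_ε the maximal solution with y(0) = y₀ exists on [0,1], has values in
    -- W_ε and is t ↦ Ψ^{[γ]}_ε(t)(y₀)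
    ∀ y₀ ∈ Vset m ε, ∀ t ∈ Icc (0 : ℝ) 1,
      ζ t y₀ ∈ Wset m ε ∧ ζ t y₀ = y₀ + ∫ s in (0 : ℝ)..t, γ s (ζ s y₀) := by
  obtain ⟨hmeas, hdiff, hreal, hbint, hbd, hhalf⟩ := hγ
  obtain ⟨hζc, hζd, hζr, hζW, hζeq⟩ := hζ
  refine ⟨?_, ?_, ?_⟩
  · exact fun t₀ ht₀ y₀ hy₀ =>
      local_existence hε hmeas hdiff hbint hbd hhalf ht₀ hy₀
  · exact fun t₀ ht₀ J hJ ht₀J hJc η₁ η₂ hc1 hc2 h1 h2 h0 =>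
      local_uniqueness hε hmeas hdiff hbint hbd hhalf ht₀ hJ ht₀J hJc hc1 hc2 h1 h2 h0
  · exact fun y₀ hy₀ t ht =>
      ⟨flow_in_W hε hmeas hdiff hreal hbint hbd hhalf hζc hζW hζeq hy₀ ht,
        hζeq t ht y₀ hy₀⟩
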